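/- Let $k$ be a field that is not locally finite (i.e., $k$ contains either $\mathbb{Q}$ or the rational function field $\mathbb{F}_q(t)$ over a finite field), and let $A$ be a torsion-free abelian group of finite rank. Then $A$ has a faithful irreducible representation over $k$; in fact, $A$ embeds into the multiplicative group of the algebraic closure $\bar{k}$, and any such embedding gives a faithful irreducible representation. -/

import Mathlib

/-- A field is locally finite if every finitely generated subfield is finite. -/
def IsLocallyFiniteField (k : Type*) [Field k] : Prop :=
  ∀ s : Finset k, Finite (Subfield.closure (s : Set k))

namespace Stmt13Aux

open Polynomial

/-! ### Part A: any injective embedding gives a simple faithful module -/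

theorem partA {k : Type*} [Field k] {G : Type*} [Group G]
    (φ : G →* (AlgebraicClosure k)ˣ) (hφ : Function.Injective φ) :
    ∃ W : Submodule k (AlgebraicClosure k), W ≠ ⊥ ∧
      (∀ a : G, ∀ x ∈ W, (φ a : AlgebraicClosure k) * x ∈ W) ∧
      (∀ U : Submodule k (AlgebraicClosure k), U ≤ W →
        (∀ a : G, ∀ x ∈ U, (φ a : AlgebraicClosure k) * x ∈ U) → U = ⊥ ∨ U = W) ∧
      (∀ a : G, (∀ x ∈ W, (φ a : AlgebraicClosure k) * x = x) → a = 1) := by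
  classical
  set K := AlgebraicClosure k
  set S : Set K := Set.range fun a : G => (φ a : K) with hS
  set B := Algebra.adjoin k S with hB
  refine ⟨Subalgebra.toSubmodule B, ?_, ?_, ?_, ?_⟩
  · intro hbot
    have h1 : (1 : K) ∈ Subalgebra.toSubmodule B := B.one_mem
    rw [hbot] at h1
    simpa using h1
  · intro a x hx
    exact B.mul_mem (Algebra.subset_adjoin ⟨a, rfl⟩) hx
  · intro U hU hUinv
    by_cases hbot : U = ⊥
    · exact Or.inl hbot
    right
    obtain ⟨u, huU, hu0⟩ := Submodule.exists_mem_ne_zero_of_ne_bot hbot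
    have key : ∀ r ∈ B, ∀ x ∈ U, r * x ∈ U := by
      intro r hr
      induction hr using Algebra.adjoin_induction with
      | mem s hs =>
        obtain ⟨a, rfl⟩ := hs
        exact hUinv a
      | algebraMap r =>
        intro x hx
        rw [Algebra.algebraMap_eq_smul_one, smul_mul_assoc, one_mul]
        exact U.smul_mem r hx
      | add r s _ _ hr hs =>
        intro x hx
        rw [add_mul]
        exact U.add_mem (hr x hx) (hs x hx)
      | mul r s _ _ hr hs =>
        intro x hx
        rw [mul_assoc]
        exact hr _ (hs x hx)
    refine le_antisymm hU ?_
    intro w hw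
    have huB : u ∈ B := hU huU
    have hinvB : u⁻¹ ∈ B :=
      B.inv_mem_of_algebraic (x := ⟨u, huB⟩)
        (Algebra.IsAlgebraic.isAlgebraic (R := k) u)
    have hwB : w * u⁻¹ ∈ B := B.mul_mem hw hinvB
    have := key _ hwB u huU
    rwa [mul_assoc, inv_mul_cancel₀ hu0, mul_one] at this
  · intro a ha
    have h1 := ha 1 B.one_mem
    rw [mul_one] at h1
    have : φ a = 1 := Units.ext h1
    apply hφ
    rw [this, map_one]

/-! ### Elementary helpers about `zpow` -/

lemma zpow_eq_pow_div_pow {K : Type*} [Field K] (x : K) (m : ℤ) (hx : x ≠ 0) :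
    x ^ m = x ^ m.toNat / x ^ (-m).toNat := by
  rcases le_or_gt 0 m with h | h
  · have h1 : (-m).toNat = 0 := by omega
    have h2 : m = (m.toNat : ℤ) := by omega
    rw [h1, pow_zero, div_one]
    conv_lhs => rw [h2]
    rw [zpow_natCast]
  · have h1 : m.toNat = 0 := by omega
    have h2 : m = -((-m).toNat : ℤ) := by omega
    rw [h1, pow_zero]
    conv_lhs => rw [h2]
    rw [zpow_neg, zpow_natCast, one_div]

lemma prod_zpow_eq_one {K : Type*} [Field K] {n : ℕ} {x : Fin n → K} (hx : ∀ i, x i ≠ 0)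
    {a : Fin n → ℤ} (h : ∏ i, x i ^ a i = 1) :
    ∏ i, x i ^ (a i).toNat = ∏ i, x i ^ (-(a i)).toNat := by
  have h2 : ∏ i, (x i ^ (a i).toNat / x i ^ (-(a i)).toNat) = 1 := by
    rw [← h]
    exact Finset.prod_congr rfl fun i _ => (zpow_eq_pow_div_pow _ _ (hx i)).symm
  rw [Finset.prod_div_distrib] at h2
  have hne : ∏ i, x i ^ (-(a i)).toNat ≠ 0 :=
    Finset.prod_ne_zero_iff.mpr fun i _ => pow_ne_zero _ (hx i)
  rwa [div_eq_one_iff_eq hne] at h2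

/-! ### Multiplicative independence in characteristic zero -/

lemma char_zero_indep {K : Type*} [Field K] [CharZero K] {n : ℕ} {P : Fin n → ℕ}
    (hp : ∀ i, (P i).Prime) (hinj : Function.Injective P) {a : Fin n → ℤ}
    (h : ∏ i, (P i : K) ^ a i = 1) : a = 0 := by
  classical
  have hQ : ∏ i, (P i : ℚ) ^ a i = 1 := by
    apply (algebraMap ℚ K).injective
    rw [map_prod, map_one, ← h]
    exact Finset.prod_congr rfl fun i _ => by rw [map_zpow₀, map_natCast]
  have hx : ∀ i : Fin n, ((P i : ℚ)) ≠ 0 := fun i =>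
    Nat.cast_ne_zero.mpr (hp i).pos.ne'
  have h2 := prod_zpow_eq_one hx hQ
  have h3 : (∏ i, P i ^ (a i).toNat : ℕ) = ∏ i, P i ^ (-(a i)).toNat := by
    have := h2
    push_cast at this
    exact_mod_cast this
  funext j
  have h4 := congrArg (fun N => N.factorization (P j)) h3
  simp only [Nat.factorization_prod (fun i _ => pow_ne_zero _ (hp i).pos.ne'),
    (Nat.Prime.factorization_pow (hp _)), Finsupp.finset_sum_apply,
    Finsupp.single_apply] at h4
  have key : ∀ (e : Fin n → ℕ),
      (∑ i, if P i = P j then e i else 0) = e j := by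
    intro e
    rw [Finset.sum_congr rfl (fun i _ =>
      if_congr ⟨fun hh => hinj hh, fun hh => by rw [hh]⟩ rfl rfl)]
    simp
  rw [key, key] at h4
  simp only [Pi.zero_apply]
  omega

/-! ### Multiplicative independence in positive characteristic -/

lemma count_roots_prod {F : Type*} [Field F] [DecidableEq F] {n : ℕ} {c : Fin n → F}
    (hc : Function.Injective c) (e : Fin n → ℕ) (j : Fin n) :
    ((∏ i, (X - C (c i)) ^ e i : F[X]).roots).count (c j) = e j := by
  classical
  have hne : ∀ i ∈ Finset.univ, ((X - C (c i)) ^ e i : F[X]) ≠ 0 :=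
    fun i _ => pow_ne_zero _ (X_sub_C_ne_zero _)
  rw [Polynomial.roots_prod _ _ (Finset.prod_ne_zero_iff.mpr hne), Multiset.count_bind]
  have hcount : ∀ i : Fin n,
      Multiset.count (c j) ((X - C (c i)) ^ e i).roots = if i = j then e j else 0 := by
    intro i
    rw [roots_pow, roots_X_sub_C, Multiset.count_nsmul, Multiset.count_singleton]
    rcases eq_or_ne i j with rfl | hij
    · simp
    · rw [if_neg (fun hh => hij (hc hh.symm)), if_neg hij, mul_zero]
  simp only [hcount]
  have : (Finset.univ.val.map fun i : Fin n => if i = j then e j else 0).sum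
      = ∑ i, if i = j then e j else 0 := rfl
  rw [this]
  simp

lemma char_p_indep {F K : Type*} [Field F] [Field K] [Algebra F K] {t : K}
    (ht : Transcendental F t) {n : ℕ} {c : Fin n → F} (hc : Function.Injective c)
    {a : Fin n → ℤ} (h : ∏ i, (t - algebraMap F K (c i)) ^ a i = 1) : a = 0 := by
  classical
  have hx : ∀ i, t - algebraMap F K (c i) ≠ 0 := by
    intro i hzero
    apply ht
    have ht2 : t = algebraMap F K (c i) := sub_eq_zero.mp hzero
    rw [ht2]
    exact isAlgebraic_algebraMap _
  have h2 := prod_zpow_eq_one hx h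
  have haev : ∀ e : Fin n → ℕ,
      aeval t (∏ i, (X - C (c i)) ^ e i : F[X]) = ∏ i, (t - algebraMap F K (c i)) ^ e i := by
    intro e
    rw [map_prod]
    exact Finset.prod_congr rfl fun i _ => by rw [map_pow, map_sub, aeval_X, aeval_C]
  have hinj : Function.Injective (aeval t : F[X] →ₐ[F] K) := by
    intro p q hpq
    have hz : aeval t (p - q) = 0 := by rw [map_sub, hpq, sub_self]
    have := transcendental_iff.mp ht _ hz
    exact sub_eq_zero.mp this
  have hP : (∏ i, (X - C (c i)) ^ (a i).toNat : F[X]) =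
      ∏ i, (X - C (c i)) ^ (-(a i)).toNat := by
    apply hinj
    rw [haev, haev]
    exact h2
  funext j
  have h4 := congrArg (fun P : F[X] => P.roots.count (c j)) hP
  simp only [count_roots_prod hc] at h4
  simp only [Pi.zero_apply]
  omega

/-! ### Existence of multiplicatively independent units -/

lemma exists_indep {k : Type*} [Field k] (hk : ¬IsLocallyFiniteField k) (n : ℕ) :
    ∃ u : Fin n → (AlgebraicClosure k)ˣ,
      ∀ a : Fin n → ℤ, ∏ i, u i ^ a i = 1 → a = 0 := by
  classical
  set K := AlgebraicClosure k with hK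
  obtain ⟨p, hp⟩ := CharP.exists k
  rcases CharP.char_is_prime_or_zero k p with hprime | hzero
  · -- positive characteristic
    haveI : Fact p.Prime := ⟨hprime⟩
    haveI : CharP K p := charP_of_injective_algebraMap (algebraMap k K).injective p
    letI : Algebra (ZMod p) k := ZMod.algebra k p
    obtain ⟨s, hsfin⟩ : ∃ s : Finset k, ¬ Finite (Subfield.closure (s : Set k)) := by
      simpa [IsLocallyFiniteField] using hk
    have hex : ∃ x ∈ (s : Set k), Transcendental (ZMod p) x := by
      by_contra hcon
      push_neg at hcon
      simp only [Transcendental, not_not] at hcon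
      apply hsfin
      haveI : Finite ((s : Set k)) := s.finite_toSet.to_subtype
      haveI : FiniteDimensional (ZMod p) (IntermediateField.adjoin (ZMod p) (s : Set k)) :=
        IntermediateField.finiteDimensional_adjoin fun x hx => (hcon x hx).isIntegral
      haveI : Finite (IntermediateField.adjoin (ZMod p) (s : Set k)) :=
        Module.finite_of_finite (ZMod p)
      have hle : Subfield.closure (s : Set k) ≤
          (IntermediateField.adjoin (ZMod p) (s : Set k)).toSubfield :=
        Subfield.closure_le.mpr (IntermediateField.subset_adjoin _ _)
      have h1 : ((IntermediateField.adjoin (ZMod p) (s : Set k)) : Set k).Finite :=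
        Set.toFinite _
      exact (h1.subset hle).to_subtype
    obtain ⟨t, hts, ht⟩ := hex
    set t' : K := algebraMap k K t with ht'def
    have ht' : Transcendental (ZMod p) t' :=
      (transcendental_algebraMap_iff (algebraMap k K).injective).mpr ht
    -- distinct roots of unity
    set m := p ^ (n + 1) - 1 with hm
    have hp2 : 2 ≤ p := hprime.two_le
    have hmn : n < m := by
      have h1 : n + 1 < 2 ^ (n + 1) := Nat.lt_two_pow_self
      have h2 : 2 ^ (n + 1) ≤ p ^ (n + 1) := Nat.pow_le_pow_left hp2 _
      omega
    have hm0 : m ≠ 0 := by omega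
    have hpm : ¬ p ∣ m := by
      intro hdvd
      have h1 : p ∣ p ^ (n + 1) := dvd_pow_self p (Nat.succ_ne_zero n)
      have hpow : 1 ≤ p ^ (n + 1) := Nat.one_le_pow _ _ (by omega)
      have h3 : p ^ (n + 1) - m = 1 := by omega
      have h2 : p ∣ 1 := h3 ▸ Nat.dvd_sub h1 hdvd
      have := Nat.dvd_one.mp h2
      omega
    have hmK : ((m : K)) ≠ 0 := by
      rw [Ne, CharP.cast_eq_zero_iff K p m]
      exact hpm
    set g : K[X] := X ^ m - C 1 with hg
    have hgne : g ≠ 0 := X_pow_sub_C_ne_zero (by omega) 1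
    have hsep : g.Separable := separable_X_pow_sub_C 1 hmK one_ne_zero
    have hsplits : g.Splits := IsAlgClosed.splits g
    have hcard : Multiset.card g.roots = m := by
      rw [splits_iff_card_roots.mp hsplits, natDegree_X_pow_sub_C]
    have hnodup : g.roots.Nodup := nodup_roots hsep
    set L : Finset K := g.roots.toFinset with hL
    have hLcard : L.card = m := by
      rw [hL, Multiset.toFinset_card_of_nodup hnodup, hcard]
    have hlen : n ≤ L.toList.length := by rw [Finset.length_toList, hLcard]; omega
    set cc : Fin n → K := fun i => L.toList.get ⟨i, lt_of_lt_of_le i.isLt hlen⟩ with hcc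
    have hccinj : Function.Injective cc := by
      intro i j hij
      have hnd : L.toList.Nodup := Finset.nodup_toList L
      have h5 := (List.Nodup.get_inj_iff hnd).mp hij
      exact Fin.ext (by simpa using congrArg Fin.val h5)
    have hccmem : ∀ i, cc i ∈ g.roots := fun i => by
      have h6 : cc i ∈ L.toList := List.get_mem _ _
      rwa [Finset.mem_toList, hL, Multiset.mem_toFinset] at h6
    have hccpow : ∀ i, (cc i) ^ m = 1 := by
      intro i
      have h1 := (mem_roots hgne).mp (hccmem i)
      have h2 : (cc i) ^ m - 1 = 0 := by simpa [hg] using h1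
      exact sub_eq_zero.mp h2
    have hint : ∀ i, IsIntegral (ZMod p) (cc i) := by
      intro i
      refine ⟨X ^ m - C 1, monic_X_pow_sub_C 1 hm0, ?_⟩
      have h7 : Polynomial.eval₂ (algebraMap (ZMod p) K) (cc i) (X ^ m - C 1) =
          (cc i) ^ m - 1 := by simp
      rw [h7, hccpow i, sub_self]
    set F := IntermediateField.adjoin (ZMod p) (Set.range cc) with hF
    haveI : Finite (Set.range cc) := (Set.finite_range cc).to_subtype
    haveI : FiniteDimensional (ZMod p) F :=
      IntermediateField.finiteDimensional_adjoin (fun x hx => by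
        obtain ⟨i, rfl⟩ := hx; exact hint i)
    have htF : Transcendental F t' := by
      intro habs
      apply ht'
      haveI : Algebra.IsIntegral (ZMod p) F := Algebra.IsIntegral.of_finite _ _
      exact (isIntegral_trans t' habs.isIntegral).isAlgebraic
    set c : Fin n → F := fun i =>
      ⟨cc i, IntermediateField.subset_adjoin _ _ ⟨i, rfl⟩⟩ with hcdef
    have hcinj : Function.Injective c := fun i j hij =>
      hccinj (congrArg Subtype.val hij)
    have hxne : ∀ i, t' - algebraMap F K (c i) ≠ 0 := by
      intro i h0
      apply htF
      have h8 : t' = algebraMap F K (c i) := sub_eq_zero.mp h0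
      rw [h8]
      exact isAlgebraic_algebraMap _
    refine ⟨fun i => Units.mk0 _ (hxne i), ?_⟩
    intro a ha
    apply char_p_indep htF hcinj (a := a)
    have h9 := congrArg (Units.coeHom K) ha
    rw [map_prod, map_one] at h9
    simpa only [Units.coeHom_apply, Units.val_zpow_eq_zpow_val, Units.val_mk0] using h9
  · -- characteristic zero
    subst hzero
    haveI : CharZero k := CharP.charP_to_charZero k
    haveI : CharZero K := charZero_of_injective_algebraMap (algebraMap k K).injective
    refine ⟨fun i => Units.mk0 (Nat.nth Nat.Prime i.val : K)
      (Nat.cast_ne_zero.mpr (Nat.prime_nth_prime i.val).pos.ne'), ?_⟩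
    intro a ha
    apply char_zero_indep (K := K) (P := fun i : Fin n => Nat.nth Nat.Prime i.val)
      (fun i => Nat.prime_nth_prime _)
      ((Nat.nth_injective Nat.infinite_setOf_prime).comp Fin.val_injective) (a := a)
    have h9 := congrArg (Units.coeHom K) ha
    rw [map_prod, map_one] at h9
    simpa only [Units.coeHom_apply, Units.val_zpow_eq_zpow_val, Units.val_mk0] using h9


/-! ### Divisibility of the unit group and extension to `ℚ`-powers -/

lemma exists_zpow_eq {K : Type*} [Field K] [IsAlgClosed K] (a : Kˣ) (m : ℤ) (hm : m ≠ 0) :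
    ∃ x : Kˣ, x ^ m = a := by
  have key : ∀ (b : Kˣ) (l : ℕ), l ≠ 0 → ∃ x : Kˣ, x ^ (l : ℤ) = b := by
    intro b l hl
    obtain ⟨z, hz⟩ := IsAlgClosed.exists_pow_nat_eq (b : K) (Nat.pos_of_ne_zero hl)
    have hz0 : z ≠ 0 := by
      rintro rfl
      rw [zero_pow hl] at hz
      exact b.ne_zero hz.symm
    refine ⟨Units.mk0 z hz0, Units.ext ?_⟩
    rw [zpow_natCast]
    simpa using hz
  rcases lt_or_gt_of_ne hm with hneg | hpos
  · obtain ⟨x, hx⟩ := key a⁻¹ (-m).toNat (by omega)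
    refine ⟨x, ?_⟩
    have h2 : m = -(((-m).toNat : ℤ)) := by omega
    conv_lhs => rw [h2]
    rw [zpow_neg, hx, inv_inv]
  · obtain ⟨x, hx⟩ := key a m.toNat (by omega)
    refine ⟨x, ?_⟩
    have h2 : m = ((m.toNat : ℤ)) := by omega
    conv_lhs => rw [h2]
    exact hx

noncomputable instance unitsDivisible {K : Type*} [Field K] [IsAlgClosed K] :
    DivisibleBy (Additive Kˣ) ℤ where
  div a m := if h : m = 0 then 0 else
    Additive.ofMul (Classical.choose (exists_zpow_eq (Additive.toMul a) m h))
  div_zero a := dif_pos rfl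
  div_cancel {m} a h := by
    rw [dif_neg h, ← ofMul_zpow, Classical.choose_spec (exists_zpow_eq (Additive.toMul a) m h)]
    rfl

lemma exists_injective_hom {k : Type*} [Field k] (hk : ¬IsLocallyFiniteField k)
    {A : Type*} [AddCommGroup A] {n : ℕ} (f : A →+ (Fin n → ℚ))
    (hf : Function.Injective f) :
    ∃ φ : Multiplicative A →* (AlgebraicClosure k)ˣ, Function.Injective φ := by
  classical
  set K := AlgebraicClosure k with hK
  obtain ⟨u, hu⟩ := exists_indep hk n
  let g : (Fin n → ℤ) →+ Additive Kˣ :=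
    AddMonoidHom.mk' (fun a => Additive.ofMul (∏ i, u i ^ a i)) (by
      intro a b
      simp only [← ofMul_mul]
      congr 1
      rw [← Finset.prod_mul_distrib]
      exact Finset.prod_congr rfl fun i _ => by
        rw [Pi.add_apply, zpow_add])
  have hg : Function.Injective g := by
    rw [injective_iff_map_eq_zero]
    intro a ha
    apply hu
    exact ofMul_eq_zero.mp ha
  have baer : Module.Baer ℤ (Additive Kˣ) := Module.Baer.of_divisible _
  let iZQ : (Fin n → ℤ) →ₗ[ℤ] (Fin n → ℚ) :=
    LinearMap.pi fun j => (Int.castAddHom ℚ).toIntLinearMap.comp (LinearMap.proj j)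
  have hiapp : ∀ (y : Fin n → ℤ) (j : Fin n), iZQ y j = (y j : ℚ) := by
    intro y j; rfl
  have hi : Function.Injective iZQ := by
    intro x y hxy
    funext j
    have := congrFun hxy j
    rw [hiapp, hiapp] at this
    exact_mod_cast this
  obtain ⟨h, hcomm⟩ := baer.extension_property iZQ hi g.toIntLinearMap
  have hh : Function.Injective h := by
    rw [injective_iff_map_eq_zero]
    intro x hx0
    by_contra hxne
    set d : ℕ := ∏ j, (x j).den with hd
    have hdpos : 0 < d := Finset.prod_pos fun j _ => (x j).pos
    set y : Fin n → ℤ := fun j => ((d / (x j).den : ℕ) : ℤ) * (x j).num with hy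
    have hyx : iZQ y = (d : ℤ) • x := by
      funext j
      rw [hiapp]
      simp only [hy]
      have hdvd : (x j).den ∣ d := Finset.dvd_prod_of_mem _ (Finset.mem_univ j)
      have hden0 : ((x j).den : ℚ) ≠ 0 := Nat.cast_ne_zero.mpr (x j).pos.ne'
      have hcast : ((d / (x j).den : ℕ) : ℚ) = (d : ℚ) / ((x j).den : ℚ) :=
        Nat.cast_div hdvd hden0
      have hsm : ((d : ℤ) • x) j = (d : ℚ) * x j := by
        rw [Pi.smul_apply, zsmul_eq_mul, Int.cast_natCast]
      rw [hsm, Int.cast_mul, Int.cast_natCast, hcast,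
        div_mul_eq_mul_div, mul_div_assoc, Rat.num_div_den]
    have hgy : g y = 0 := by
      have h1 : h (iZQ y) = g y := LinearMap.congr_fun hcomm y
      rw [hyx, map_smul, hx0, smul_zero] at h1
      exact h1.symm
    have hy0 : y = 0 := hg (by rw [hgy, map_zero])
    have hdx : (d : ℤ) • x = 0 := by rw [← hyx, hy0, map_zero]
    apply hxne
    funext j
    have h2 := congrFun hdx j
    rw [Pi.smul_apply, zsmul_eq_mul, Int.cast_natCast, Pi.zero_apply] at h2
    have hd0 : (d : ℚ) ≠ 0 := Nat.cast_ne_zero.mpr hdpos.ne'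
    exact (mul_eq_zero.mp h2).resolve_left hd0
  refine ⟨AddMonoidHom.toMultiplicativeLeft (h.toAddMonoidHom.comp f), ?_⟩
  intro x y hxy
  have h3 : Additive.toMul (h (f x.toAdd)) = Additive.toMul (h (f y.toAdd)) := hxy
  exact Multiplicative.toAdd.injective (hf (hh (Additive.toMul.injective h3)))

end Stmt13Aux

/-- A torsion-free abelian group of finite rank has a faithful irreducible representation
over any field `k` that is not locally finite: it embeds in the multiplicative group of the
algebraic closure, and any such embedding gives a faithful irreducible representation. -/
theorem stmt_13 {k : Type*} [Field k] (hk : ¬ IsLocallyFiniteField k)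
    (A : Type*) [AddCommGroup A] (htf : NoZeroSMulDivisors ℤ A)
    (n : ℕ) (f : A →+ (Fin n → ℚ)) (hf : Function.Injective f) :
    (∃ φ : Multiplicative A →* (AlgebraicClosure k)ˣ, Function.Injective φ) ∧
    ∀ φ : Multiplicative A →* (AlgebraicClosure k)ˣ, Function.Injective φ →
      ∃ W : Submodule k (AlgebraicClosure k), W ≠ ⊥ ∧
        (∀ a : Multiplicative A, ∀ x ∈ W, (φ a : AlgebraicClosure k) * x ∈ W) ∧
        (∀ U : Submodule k (AlgebraicClosure k), U ≤ W →
          (∀ a : Multiplicative A, ∀ x ∈ U, (φ a : AlgebraicClosure k) * x ∈ U) →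
          U = ⊥ ∨ U = W) ∧
        (∀ a : Multiplicative A,
          (∀ x ∈ W, (φ a : AlgebraicClosure k) * x = x) → a = 1) :=
  ⟨Stmt13Aux.exists_injective_hom hk f hf, fun φ hφ => Stmt13Aux.partA φ hφ⟩
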